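/- Let m ≥ 1 and let y_λ ∈ [δ/4, π/4] with δ ∈ (0, δ₀), cos(δ₀) ≥ 1/2, and δ₀ ≤ π/12. Then sin(y_λ + δ/8)^m - sin(y_λ)^m ≥ (m/8^{m+1}) δ^m. -/

import Mathlib

open Real

lemma pow_sub_pow_ge_aux {a b : ℝ} (hb : 0 < b) (hab : b ≤ a) (m : ℕ) :
    a ^ m - b ^ m ≥ (m : ℝ) * b ^ (m - 1) * (a - b) := by
  rcases Nat.eq_zero_or_pos m with rfl | hmpos
  · simp
  have hx : (0:ℝ) ≤ a / b - 1 := by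
    rw [sub_nonneg, le_div_iff₀ hb]; linarith
  have hber := one_add_mul_le_pow (by linarith : (-2:ℝ) ≤ a / b - 1) m
  rw [add_sub_cancel] at hber
  have hbm : (0:ℝ) < b ^ m := pow_pos hb m
  have h1 : (a / b) ^ m * b ^ m = a ^ m := by
    rw [div_pow]; field_simp
  have h2 : (1 + (m : ℝ) * (a / b - 1)) * b ^ m ≤ (a / b) ^ m * b ^ m :=
    mul_le_mul_of_nonneg_right hber hbm.le
  rw [h1] at h2
  have hb1 : b ^ (m - 1) * b = b ^ m := by
    rw [← pow_succ, Nat.sub_add_cancel hmpos]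
  have h3 : (a / b - 1) * b = a - b := by field_simp
  have hexpand : (1 + (m : ℝ) * (a / b - 1)) * b ^ m
      = b ^ m + (m : ℝ) * b ^ (m - 1) * (a - b) := by
    rw [← hb1, ← h3]; ring
  rw [hexpand] at h2
  linarith

set_option maxHeartbeats 1000000 in
/-- Mean-value-theorem estimate in the case `y_λ ≤ π/4`:
`sin(y_λ + δ/8)^m - sin(y_λ)^m ≥ (m/8^{m+1}) δ^m`. -/
theorem stmt_16 (m : ℕ) (hm : 1 ≤ m) (δ₀ : ℝ) (hδ₀ : 0 < δ₀)
    (hcos : Real.cos δ₀ ≥ 1/2) (hδ₀small : δ₀ ≤ π / 12)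
    (δ : ℝ) (hδ : 0 < δ) (hδlt : δ < δ₀)
    (yl : ℝ) (hyl : yl ∈ Set.Icc (δ / 4) (π / 4)) :
    Real.sin (yl + δ / 8) ^ m - Real.sin yl ^ m ≥ ((m : ℝ) / 8 ^ (m + 1)) * δ ^ m := by
  obtain ⟨hyl1, hyl2⟩ := hyl
  have hpi4 : π ≤ 4 := pi_le_four
  have hpipos : 0 < π := pi_pos
  have hδle : δ ≤ 1/3 := by nlinarith
  have hylpos : 0 < yl := lt_of_lt_of_le (by linarith) hyl1
  have hyl1' : yl ≤ 1 := by linarith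
  -- b := sin yl ≥ δ/8
  have hsin_yl : Real.sin yl ≥ δ / 8 := by
    have := Real.sin_gt_sub_cube hylpos
    nlinarith [sq_nonneg yl, sq_nonneg (yl - 1)]
  have hbpos : 0 < Real.sin yl := lt_of_lt_of_le (by linarith) hsin_yl
  -- a - b ≥ δ/32
  have hdiff : Real.sin (yl + δ / 8) - Real.sin yl ≥ δ / 32 := by
    rw [Real.sin_sub_sin]
    have he1 : (yl + δ / 8 - yl) / 2 = δ / 16 := by ring
    have he2 : (yl + δ / 8 + yl) / 2 = yl + δ / 16 := by ring
    rw [he1, he2]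
    have hsmall : δ / 16 ≤ 1 := by linarith
    have hsq : δ ^ 2 ≤ 1 := by nlinarith
    have hcube : δ ^ 3 ≤ δ := by nlinarith [mul_nonneg hδ.le (sub_nonneg.2 hsq)]
    have hs : Real.sin (δ / 16) ≥ δ / 32 := by
      have := Real.sin_gt_sub_cube (by linarith : 0 < δ / 16)
      nlinarith
    have hc : Real.cos (yl + δ / 16) ≥ 1 / 2 := by
      have h3 : yl + δ / 16 ≤ π / 3 := by linarith
      calc Real.cos (yl + δ/16) ≥ Real.cos (π/3) :=
            Real.cos_le_cos_of_nonneg_of_le_pi (by positivity) (by linarith) h3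
        _ = 1/2 := Real.cos_pi_div_three
    nlinarith [Real.sin_nonneg_of_nonneg_of_le_pi (by positivity : (0:ℝ) ≤ δ/16) (by linarith)]
  have key := pow_sub_pow_ge_aux hbpos (by linarith) m
  have hpow : Real.sin yl ^ (m - 1) ≥ (δ / 8) ^ (m - 1) :=
    pow_le_pow_left₀ (by positivity) hsin_yl (m - 1)
  have hstep : (m : ℝ) * Real.sin yl ^ (m - 1) * (Real.sin (yl + δ/8) - Real.sin yl)
      ≥ (m : ℝ) * (δ / 8) ^ (m - 1) * (δ / 32) := by
    have hmpos : (0:ℝ) ≤ m := Nat.cast_nonneg m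
    have h1 : (m : ℝ) * (δ / 8) ^ (m - 1) ≤ (m : ℝ) * Real.sin yl ^ (m - 1) :=
      mul_le_mul_of_nonneg_left hpow hmpos
    have h2 : (0:ℝ) ≤ (m : ℝ) * (δ / 8) ^ (m - 1) := by positivity
    nlinarith [pow_nonneg (le_of_lt hbpos) (m-1)]
  have hfinal : (m : ℝ) * (δ / 8) ^ (m - 1) * (δ / 32) ≥ ((m : ℝ) / 8 ^ (m + 1)) * δ ^ m := by
    have hm' : m - 1 + 1 = m := Nat.sub_add_cancel hm
    have hδm : δ ^ m = δ ^ (m - 1) * δ := by rw [← pow_succ, hm']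
    have h8 : (8:ℝ) ^ (m + 1) = 8 ^ (m - 1) * 64 := by
      rw [show m + 1 = (m - 1) + 2 by omega, pow_add]; norm_num
    have e1 : (m:ℝ) * (δ/8)^(m-1) * (δ/32) = (m:ℝ) * δ^m / (8^(m-1) * 32) := by
      rw [div_pow, hδm]; ring
    have e2 : ((m:ℝ)/8^(m+1)) * δ^m = (m:ℝ) * δ^m / (8^(m-1) * 64) := by
      rw [h8]; ring
    rw [ge_iff_le, e1, e2]
    have hnum : (0:ℝ) ≤ (m:ℝ) * δ^m := by positivity
    have hden : (0:ℝ) < (8:ℝ)^(m-1) * 32 := by positivity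
    have hden2 : ((8:ℝ)^(m-1) * 32) ≤ ((8:ℝ)^(m-1) * 64) := by
      have := pow_pos (show (0:ℝ) < 8 by norm_num) (m-1); nlinarith
    exact div_le_div_of_nonneg_left hnum hden hden2
  linarith
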